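/- Let ν be a Borel measure on ℝ^d with c₀ 2^{−mn} ≤ ν(D_m^a) < ∞ for all a ∈ ℝⁿ and m ∈ ℤ, for some constant c₀ > 0. Then for all x, y, z ∈ ℝ^d and m ∈ ℤ, Λ_m^ν(x,z;y) ≤ C 2^{m(n+1)} |z̃ − ỹ|, where C depends only on n and c₀. In particular, if |z̃ − ỹ| ≤ 3√n 2^{−j} then Λ_m^ν(x,z;y) ≤ C' 2^{m(n+1)−j} with C' depending only on n and c₀. -/

import Mathlib

open MeasureTheory Set Filter ENNReal NNReal

noncomputable section

/-- Euclidean space `ℝ^k`. -/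
abbrev Euc (k : ℕ) : Type := EuclideanSpace ℝ (Fin k)

/-- Projection `x ↦ x̃` onto the first `n` coordinates. -/
def projn (n d : ℕ) (h : n ≤ d) (x : Euc d) : Euc n := WithLp.toLp 2 fun i => x (Fin.castLE h i)

/-- An odd Calderón–Zygmund kernel of homogeneity `-n` on `ℝ^d`, with constant `CK`. -/
structure IsCZKernel (n d : ℕ) (CK : ℝ) (K : Euc d → ℝ) : Prop where
  pos : 0 < CK
  odd : ∀ x : Euc d, K (-x) = -K x
  diff : ∀ x : Euc d, x ≠ 0 → DifferentiableAt ℝ K x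
  diff2 : ∀ x : Euc d, x ≠ 0 → DifferentiableAt ℝ (fderiv ℝ K) x
  bound : ∀ x : Euc d, x ≠ 0 → |K x| ≤ CK / ‖x‖ ^ n
  fderiv_bound : ∀ x : Euc d, x ≠ 0 → ‖fderiv ℝ K x‖ ≤ CK / ‖x‖ ^ (n + 1)
  fderiv2_bound : ∀ x : Euc d, x ≠ 0 → ‖fderiv ℝ (fderiv ℝ K) x‖ ≤ CK / ‖x‖ ^ (n + 2)

/-- The smooth truncation profile `φ_ℝ`: a nondecreasing `C²` function with
`χ_{[3√n,∞)} ≤ φ_ℝ ≤ χ_{[2.1√n,∞)}` (extended by `0` to all of `ℝ`). -/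
structure IsCutoff (n : ℕ) (φR : ℝ → ℝ) : Prop where
  mono : Monotone φR
  smooth : ContDiff ℝ 2 φR
  nonneg : ∀ t : ℝ, 0 ≤ φR t
  le_one : ∀ t : ℝ, φR t ≤ 1
  eq_zero : ∀ t : ℝ, t < 2.1 * Real.sqrt n → φR t = 0
  eq_one : ∀ t : ℝ, 3 * Real.sqrt n ≤ t → φR t = 1

/-- `φ_ε(x) = φ_ℝ(|x̃|/ε)`. -/
def phiE (n d : ℕ) (h : n ≤ d) (φR : ℝ → ℝ) (ε : ℝ) (x : Euc d) : ℝ :=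
  φR (‖projn n d h x‖ / ε)

/-- The map `u ↦ (u, A u)` from `ℝⁿ` to `ℝ^d`. -/
def graphMap (n d : ℕ) (h : n ≤ d) (A : Euc n → Euc (d - n)) (u : Euc n) : Euc d :=
  WithLp.toLp 2 fun (i : Fin d) => if hi : (i : ℕ) < n then u ⟨i, hi⟩
           else A u ⟨(i : ℕ) - n, by have := i.isLt; omega⟩

/-- The graph `Γ` of `A`. -/
def graphSet (n d : ℕ) (h : n ≤ d) (A : Euc n → Euc (d - n)) : Set (Euc d) :=
  Set.range (graphMap n d h A)

/-- `H^n` restricted to the graph of `A`. -/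
def graphMeasure (n d : ℕ) (h : n ≤ d) (A : Euc n → Euc (d - n)) : Measure (Euc d) :=
  (μH[(n : ℝ)]).restrict (graphSet n d h A)

/-- The measure `f · H^n_Γ`. -/
def lipGraphMeasure (n d : ℕ) (h : n ≤ d) (A : Euc n → Euc (d - n)) (f : Euc d → ℝ) :
    Measure (Euc d) :=
  (graphMeasure n d h A).withDensity fun y => ENNReal.ofReal (f y)

/-- The smoothly truncated singular integral `T^ν_{φ_ε} f(x) = ∫ φ_ε(x-y) K(x-y) f(y) dν(y)`. -/
def Tphi (n d : ℕ) (h : n ≤ d) (φR : ℝ → ℝ) (K : Euc d → ℝ) (ν : Measure (Euc d))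
    (f : Euc d → ℝ) (ε : ℝ) (x : Euc d) : ℝ :=
  ∫ y, phiE n d h φR ε (x - y) * K (x - y) * f y ∂ν

/-- The `ρ`-variation of a family `G = {G ε}_{ε > 0}`. -/
def varRho (ρ : ℝ) (G : ℝ → ℝ) : ℝ≥0∞ :=
  ⨆ (ε : ℤ → ℝ) (_ : Antitone ε) (_ : ∀ m : ℤ, 0 < ε m),
    (∑' m : ℤ, (ENNReal.ofReal |G (ε (m + 1)) - G (ε m)|) ^ ρ) ^ (1 / ρ)

/-- The oscillation of a family `G = {G ε}_{ε > 0}` with respect to a fixed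
sequence `r`. -/
def oscO (r : ℤ → ℝ) (G : ℝ → ℝ) : ℝ≥0∞ :=
  ⨆ (ε : ℤ → ℝ) (δ : ℤ → ℝ)
    (_ : ∀ m : ℤ, r (m + 1) ≤ ε m ∧ ε m ≤ δ m ∧ δ m ≤ r m),
    (∑' m : ℤ, (ENNReal.ofReal |G (ε m) - G (δ m)|) ^ (2 : ℝ)) ^ (1 / 2 : ℝ)

/-- The `λ`-jump counting function of a family `G = {G ε}_{ε > 0}`. -/
def jumpN (lam : ℝ) (G : ℝ → ℝ) : ℝ≥0∞ :=
  ⨆ (N : ℕ) (_ : ∃ ε δ : ℕ → ℝ,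
      (∀ i, i < N → 0 < ε i) ∧ (∀ i, i < N → ε i < δ i) ∧
      (∀ i, i + 1 < N → δ i ≤ ε (i + 1)) ∧
      (∀ i, i < N → lam < |G (ε i) - G (δ i)|)), (N : ℝ≥0∞)

/-- The `ρ`-variation of a `ℤ`-indexed family. -/
def varRhoZ (ρ : ℝ) (G : ℤ → ℝ) : ℝ≥0∞ :=
  ⨆ (mk : ℤ → ℤ) (_ : Antitone mk),
    (∑' k : ℤ, (ENNReal.ofReal |G (mk (k + 1)) - G (mk k)|) ^ ρ) ^ (1 / ρ)

/-- The oscillation of a `ℤ`-indexed family with respect to a fixed integer sequence `r`. -/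
def oscZ (r : ℤ → ℤ) (G : ℤ → ℝ) : ℝ≥0∞ :=
  ⨆ (ε : ℤ → ℤ) (δ : ℤ → ℤ)
    (_ : ∀ m : ℤ, r (m + 1) ≤ ε m ∧ ε m ≤ δ m ∧ δ m ≤ r m),
    (∑' m : ℤ, (ENNReal.ofReal |G (ε m) - G (δ m)|) ^ (2 : ℝ)) ^ (1 / 2 : ℝ)

/-- A cube `a + [0,b)^n ⊆ ℝⁿ`. -/
def cubeSet (n : ℕ) (a : Euc n) (b : ℝ) : Set (Euc n) :=
  {u | ∀ i : Fin n, a i ≤ u i ∧ u i < a i + b}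

/-- A "vertical" cube `D = D̃ × ℝ^{d-n}`, `D̃` a cube of `ℝⁿ`. -/
def IsVCube (n d : ℕ) (h : n ≤ d) (D : Set (Euc d)) : Prop :=
  ∃ (a : Euc n) (b : ℝ), 0 < b ∧ D = {x : Euc d | projn n d h x ∈ cubeSet n a b}

/-- The half-open v-cube with center `z` (in `ℝⁿ`) and side length `ℓ`. -/
def vQ (n d : ℕ) (h : n ≤ d) (z : Euc n) (ℓ : ℝ) : Set (Euc d) :=
  {x : Euc d | ∀ i : Fin n,
    z i - ℓ / 2 ≤ projn n d h x i ∧ projn n d h x i < z i + ℓ / 2}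

/-- The cylinder `B(z̃_Q, C_Γ ℓ(Q)) × ℝ^{d-n}` associated with the v-cube of center `z`
and side length `ℓ`. -/
def BQ (n d : ℕ) (h : n ≤ d) (CΓ : ℝ) (z : Euc n) (ℓ : ℝ) : Set (Euc d) :=
  {x : Euc d | dist (projn n d h x) z ≤ CΓ * ℓ}

/-- The grid cube `D_m^a = (a + [0, 2^{-m})^n) × ℝ^{d-n}`. -/
def Dgrid (n d : ℕ) (h : n ≤ d) (a : Euc n) (m : ℤ) : Set (Euc d) :=
  {x : Euc d | projn n d h x ∈ cubeSet n a ((2 : ℝ) ^ (-m))}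

/-- The center of the dyadic cube `2^{-m}(k + [0,1)^n)`. -/
def dyadicCenter (n : ℕ) (m : ℤ) (k : Fin n → ℤ) : Euc n :=
  WithLp.toLp 2 fun i => ((k i : ℝ) + 1 / 2) * (2 : ℝ) ^ (-m)

/-- `∫_{D^c} K(z-y) dν(y)`, understood as `lim_{M→∞} ∫_{D^c ∩ {|z-y|<M}} K(z-y) dν(y)`. -/
def Ktail (d : ℕ) (K : Euc d → ℝ) (ν : Measure (Euc d)) (D : Set (Euc d)) (z : Euc d) : ℝ :=
  limUnder atTop fun M : ℝ => ∫ y in Dᶜ ∩ Metric.ball z M, K (z - y) ∂ν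

/-- `E_D ν = ν(D)⁻¹ ∫_D ∫_{D^c} K(z-y) dν(y) dν(z)`. -/
def cubeAvg (d : ℕ) (K : Euc d → ℝ) (ν : Measure (Euc d)) (D : Set (Euc d)) : ℝ :=
  ((ν D).toReal)⁻¹ * ∫ z in D, Ktail d K ν D z ∂ν

/-- The averaged martingale `E_m ν(x) = 2^{mn} ∫_{{a : x ∈ D_m^a}} E_{D_m^a} ν da`. -/
def Em (n d : ℕ) (h : n ≤ d) (K : Euc d → ℝ) (ν : Measure (Euc d)) (m : ℤ) (x : Euc d) : ℝ :=
  (2 : ℝ) ^ (m * (n : ℤ)) *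
    ∫ a in {a : Euc n | x ∈ Dgrid n d h a m},
      cubeAvg d K ν (Dgrid n d h a m) ∂(volume : Measure (Euc n))

/-- `Λ_m^ν(x,z;y) = 2^{mn} ∫_{{a : x,z ∈ D_m^a, y ∉ D_m^a}} ν(D_m^a)⁻¹ da`. -/
def LambdaM (n d : ℕ) (h : n ≤ d) (ν : Measure (Euc d)) (m : ℤ) (x z y : Euc d) : ℝ :=
  (2 : ℝ) ^ (m * (n : ℤ)) *
    ∫ a in {a : Euc n |
        x ∈ Dgrid n d h a m ∧ z ∈ Dgrid n d h a m ∧ y ∉ Dgrid n d h a m},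
      ((ν (Dgrid n d h a m)).toReal)⁻¹ ∂(volume : Measure (Euc n))

/-- The doubly truncated maximal singular integral
`T_*ν(x) = sup_{0<ε<M} |∫_{ε<|x-y|<M} K(x-y) dν(y)|`. -/
def Tstar (d : ℕ) (K : Euc d → ℝ) (ν : Measure (Euc d)) (x : Euc d) : ℝ≥0∞ :=
  ⨆ (ε : ℝ) (M : ℝ) (_ : 0 < ε) (_ : ε < M),
    ENNReal.ofReal |∫ y in {y : Euc d | ε < dist x y ∧ dist x y < M}, K (x - y) ∂ν|

/-- `(Kφ_ε ∗ ν)(x)`, understood as `lim_{M→∞} ∫_{|x-y|<M} φ_ε(x-y) K(x-y) dν(y)`. -/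
def KphiM (n d : ℕ) (h : n ≤ d) (φR : ℝ → ℝ) (K : Euc d → ℝ) (ν : Measure (Euc d))
    (ε : ℝ) (x : Euc d) : ℝ :=
  limUnder atTop fun M : ℝ =>
    ∫ y in Metric.ball x M, phiE n d h φR ε (x - y) * K (x - y) ∂ν

/-- An (affine) `n`-plane in `ℝ^d`. -/
def IsNPlane (n d : ℕ) (L : Set (Euc d)) : Prop :=
  ∃ (p : Euc d) (φ : Euc n →ₗᵢ[ℝ] Euc d), L = Set.range fun u => p + φ u

/-- The localized Wasserstein-type distance
`dist_F(σ,ν) = sup {|∫ g dσ - ∫ g dν| : Lip(g) ≤ 1, supp g ⊆ F}`. -/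
def wdist (d : ℕ) (F : Set (Euc d)) (σ ν : Measure (Euc d)) : ℝ≥0∞ :=
  ⨆ (g : Euc d → ℝ) (_ : LipschitzWith 1 g) (_ : Function.support g ⊆ F),
    ENNReal.ofReal |(∫ y, g y ∂σ) - ∫ y, g y ∂ν|

/-- The (topological) support of a measure. -/
def msupport (d : ℕ) (μ : Measure (Euc d)) : Set (Euc d) :=
  {x : Euc d | ∀ U : Set (Euc d), IsOpen U → x ∈ U → 0 < μ U}

open Classical in
/-- The coefficient `α_μ(Q)` of the v-cube `Q` with center `z` and side length `ℓ`. -/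
def alphaC (n d : ℕ) (h : n ≤ d) (CΓ : ℝ) (μ : Measure (Euc d)) (z : Euc n) (ℓ : ℝ) :
    ℝ≥0∞ :=
  if vQ n d h z ℓ ∩ msupport d μ = ∅ then 0
  else (ENNReal.ofReal (ℓ ^ (n + 1)))⁻¹ *
    ⨅ (c : ℝ≥0) (L : Set (Euc d)) (_ : IsNPlane n d L),
      wdist d (BQ n d h CΓ z ℓ) μ ((c : ℝ≥0∞) • (μH[(n : ℝ)]).restrict L)

/-- The coefficient `β_{2,μ}(Q)` of the v-cube `Q` with center `z` and side length `ℓ`. -/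
def beta2 (n d : ℕ) (h : n ≤ d) (CΓ : ℝ) (μ : Measure (Euc d)) (z : Euc n) (ℓ : ℝ) :
    ℝ≥0∞ :=
  ⨅ (L : Set (Euc d)) (_ : IsNPlane n d L),
    ((ENNReal.ofReal (ℓ ^ n))⁻¹ *
      ∫⁻ y in vQ n d h z (CΓ * ℓ),
        ENNReal.ofReal ((Metric.infDist y L / ℓ) ^ 2) ∂μ) ^ (1 / 2 : ℝ)

/-- The average `m_Q(g) = μ(Q)⁻¹ ∫_Q g dμ`. -/
def mAvg (d : ℕ) (μ : Measure (Euc d)) (Q : Set (Euc d)) (g : Euc d → ℝ) : ℝ :=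
  ((μ Q).toReal)⁻¹ * ∫ y in Q, g y ∂μ

/-- The Hardy–Littlewood maximal operator over v-cubes. -/
def maxHL (n d : ℕ) (h : n ≤ d) (μ : Measure (Euc d)) (g : Euc d → ℝ) (x : Euc d) : ℝ≥0∞ :=
  ⨆ (Q : Set (Euc d)) (_ : IsVCube n d h Q) (_ : x ∈ Q),
    ENNReal.ofReal (mAvg d μ Q fun y => |g y|)

/-- The sharp maximal operator over v-cubes. -/
def maxSharp (n d : ℕ) (h : n ≤ d) (μ : Measure (Euc d)) (g : Euc d → ℝ) (x : Euc d) :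
    ℝ≥0∞ :=
  ⨆ (Q : Set (Euc d)) (_ : IsVCube n d h Q) (_ : x ∈ Q),
    ENNReal.ofReal (mAvg d μ Q fun y => |g y - mAvg d μ Q g|)

/-- The centered Hardy–Littlewood maximal operator `M^ν`. -/
def maxB (d : ℕ) (ν : Measure (Euc d)) (f : Euc d → ℝ) (x : Euc d) : ℝ≥0∞ :=
  ⨆ (r : ℝ) (_ : 0 < r),
    (ν (Metric.ball x r))⁻¹ * ∫⁻ y in Metric.ball x r, ENNReal.ofReal |f y| ∂ν

lemma abs_coord_le_norm' (n : ℕ) (v : Euc n) (i : Fin n) : |v i| ≤ ‖v‖ := by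
  rw [EuclideanSpace.norm_eq]
  have : |v i| = Real.sqrt (‖v i‖ ^ 2) := by rw [Real.sqrt_sq_eq_abs]; simp
  rw [this]
  exact Real.sqrt_le_sqrt (Finset.single_le_sum (fun j _ => sq_nonneg ‖v j‖) (Finset.mem_univ i))

lemma vol_pi_preimage' (n : ℕ) (t : Fin n → Set ℝ) (ht : ∀ j, MeasurableSet (t j)) :
    (volume : Measure (Euc n)) (((MeasurableEquiv.toLp 2 (Fin n → ℝ)).symm) ⁻¹' Set.pi Set.univ t)
      = ∏ j, volume (t j) := by
  rw [(EuclideanSpace.volume_preserving_symm_measurableEquiv_toLp (Fin n)).measure_preimage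
    ((MeasurableSet.univ_pi ht).nullMeasurableSet)]
  exact volume_pi_pi t

lemma cover_vol' (n : ℕ) (δ : ℝ) (hδ : 0 < δ) (zt yt : Euc n) (S : Set (Euc n))
    (hS : ∀ a ∈ S, (∀ j : Fin n, a j ≤ zt j ∧ zt j < a j + δ) ∧
      ∃ i : Fin n, yt i < a i ∨ a i + δ ≤ yt i) :
    volume S ≤ ENNReal.ofReal (2 * n * ‖zt - yt‖ * δ ^ (n - 1)) := by
  classical
  set e := (MeasurableEquiv.toLp 2 (Fin n → ℝ)).symm with he
  set I0 : Fin n → Set ℝ := fun j => Set.Ioc (zt j - δ) (zt j) with hI0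
  -- generic product estimate
  have hvol : ∀ (i : Fin n) (T : Set ℝ), MeasurableSet T →
      volume T ≤ ENNReal.ofReal ‖zt - yt‖ →
      volume (e ⁻¹' Set.pi Set.univ (fun j => if j = i then T else I0 j))
        ≤ ENNReal.ofReal ‖zt - yt‖ * ENNReal.ofReal δ ^ (n - 1) := by
    intro i T hT hTle
    rw [vol_pi_preimage' n _ (fun j => by
      by_cases h : j = i
      · simpa [h] using hT
      · simpa [h, hI0] using measurableSet_Ioc)]
    rw [← Finset.mul_prod_erase Finset.univ _ (Finset.mem_univ i), if_pos rfl]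
    have hrest : ∏ j ∈ Finset.univ.erase i, volume (if j = i then T else I0 j)
        = ENNReal.ofReal δ ^ (n - 1) := by
      calc ∏ j ∈ Finset.univ.erase i, volume (if j = i then T else I0 j)
          = ∏ _j ∈ Finset.univ.erase i, ENNReal.ofReal δ :=
            Finset.prod_congr rfl (fun j hj => by
              rw [if_neg (Finset.ne_of_mem_erase hj)]
              simp [hI0, Real.volume_Ioc])
        _ = ENNReal.ofReal δ ^ (n - 1) := by
            rw [Finset.prod_const, Finset.card_erase_of_mem (Finset.mem_univ i),
              Finset.card_univ, Fintype.card_fin]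
    rw [hrest]
    exact mul_le_mul_left hTle _
  have hcoord : ∀ i : Fin n, ∀ r : ℝ, r ≤ zt i - yt i ∨ r ≤ yt i - zt i →
      ENNReal.ofReal r ≤ ENNReal.ofReal ‖zt - yt‖ := by
    intro i r hr
    apply ENNReal.ofReal_le_ofReal
    have h1 : |zt i - yt i| ≤ ‖zt - yt‖ := by
      have := abs_coord_le_norm' n (zt - yt) i
      simpa using this
    rcases hr with hr | hr
    · exact hr.trans ((le_abs_self _).trans h1)
    · have h2 : yt i - zt i ≤ |yt i - zt i| := le_abs_self _
      rw [abs_sub_comm] at h2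
      exact hr.trans (h2.trans h1)
  have h1 : ∀ i : Fin n,
      volume (e ⁻¹' Set.pi Set.univ (fun j =>
        if j = i then Set.Ioc (max (zt i - δ) (yt i)) (zt i) else I0 j))
        ≤ ENNReal.ofReal ‖zt - yt‖ * ENNReal.ofReal δ ^ (n - 1) := by
    intro i
    refine hvol i _ measurableSet_Ioc ?_
    rw [Real.volume_Ioc]
    exact hcoord i _ (Or.inl (by
      have := le_max_right (zt i - δ) (yt i); linarith))
  have h2 : ∀ i : Fin n,
      volume (e ⁻¹' Set.pi Set.univ (fun j =>
        if j = i then Set.Ioc (zt i - δ) (min (zt i) (yt i - δ)) else I0 j))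
        ≤ ENNReal.ofReal ‖zt - yt‖ * ENNReal.ofReal δ ^ (n - 1) := by
    intro i
    refine hvol i _ measurableSet_Ioc ?_
    rw [Real.volume_Ioc]
    exact hcoord i _ (Or.inr (by
      have := min_le_right (zt i) (yt i - δ); linarith))
  have hcover : S ⊆ ⋃ i : Fin n,
      ((e ⁻¹' Set.pi Set.univ (fun j =>
          if j = i then Set.Ioc (max (zt i - δ) (yt i)) (zt i) else I0 j)) ∪
       (e ⁻¹' Set.pi Set.univ (fun j =>
          if j = i then Set.Ioc (zt i - δ) (min (zt i) (yt i - δ)) else I0 j))) := by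
    intro a ha
    obtain ⟨hz, i, hi⟩ := hS a ha
    refine Set.mem_iUnion.mpr ⟨i, ?_⟩
    have hea : ∀ j : Fin n, e a j = a j := fun _ => rfl
    rcases hi with hi | hi
    · left
      intro j _
      rw [hea]
      by_cases hj : j = i
      · subst hj
        simp only [if_pos rfl]
        exact ⟨max_lt (by linarith [(hz j).2]) hi, (hz j).1⟩
      · simp only [if_neg hj, hI0]
        exact ⟨by linarith [(hz j).2], (hz j).1⟩
    · right
      intro j _
      rw [hea]
      by_cases hj : j = i
      · subst hj
        simp only [if_pos rfl]
        exact ⟨by linarith [(hz j).2], le_min (hz j).1 (by linarith)⟩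
      · simp only [if_neg hj, hI0]
        exact ⟨by linarith [(hz j).2], (hz j).1⟩
  calc volume S ≤ volume (⋃ i : Fin n, _) := measure_mono hcover
    _ ≤ ∑ i : Fin n, _ := measure_iUnion_fintype_le _ _
    _ ≤ ∑ _i : Fin n,
        (2 * (ENNReal.ofReal ‖zt - yt‖ * ENNReal.ofReal δ ^ (n - 1))) := by
        refine Finset.sum_le_sum fun i _ => ?_
        refine (measure_union_le _ _).trans ?_
        rw [two_mul]
        exact add_le_add (h1 i) (h2 i)
    _ = n * (2 * (ENNReal.ofReal ‖zt - yt‖ * ENNReal.ofReal δ ^ (n - 1))) := by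
        rw [Finset.sum_const, Finset.card_univ, Fintype.card_fin, nsmul_eq_mul]
    _ = ENNReal.ofReal (2 * n * ‖zt - yt‖ * δ ^ (n - 1)) := by
        rw [ENNReal.ofReal_mul (by positivity), ENNReal.ofReal_mul (by positivity),
          ENNReal.ofReal_mul (by norm_num), ENNReal.ofReal_pow hδ.le,
          ENNReal.ofReal_ofNat, ENNReal.ofReal_natCast]
        ring


/-- (Claim 4.4, first bound.) If `ν(D_m^a) ≥ c₀ 2^{-mn}` for all `a, m`,
then `Λ_m^ν(x,z;y) ≤ C 2^{m(n+1)} |z̃ − ỹ|`; in particular, if `|z̃ − ỹ| ≤ 3√n 2^{-j}` then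
`Λ_m^ν(x,z;y) ≤ C' 2^{m(n+1)−j}`, with `C, C'` depending only on `n` and `c₀`. -/
theorem Lambda_bound_proj_dist
    (n : ℕ) (hn : 0 < n) (c₀ : ℝ) (hc₀ : 0 < c₀) :
    ∃ C C' : ℝ, 0 < C ∧ 0 < C' ∧
      ∀ (d : ℕ) (hnd : n < d) (ν : Measure (Euc d)),
        (∀ (a : Euc n) (m : ℤ),
          ENNReal.ofReal (c₀ * (2 : ℝ) ^ (-(m * (n : ℤ)))) ≤ ν (Dgrid n d hnd.le a m) ∧
            ν (Dgrid n d hnd.le a m) < ⊤) →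
        ∀ (m : ℤ) (x y z : Euc d),
          LambdaM n d hnd.le ν m x z y
              ≤ C * (2 : ℝ) ^ (m * ((n : ℤ) + 1)) *
                ‖projn n d hnd.le z - projn n d hnd.le y‖ ∧
          ∀ j : ℤ,
            ‖projn n d hnd.le z - projn n d hnd.le y‖ ≤ 3 * Real.sqrt n * (2 : ℝ) ^ (-j) →
            LambdaM n d hnd.le ν m x z y ≤ C' * (2 : ℝ) ^ (m * ((n : ℤ) + 1) - j) := by
  have hn' : (0:ℝ) < n := by exact_mod_cast hn
  have hC : (0:ℝ) < 2 * n / c₀ := div_pos (by linarith) hc₀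
  have hsq : (0:ℝ) < 3 * Real.sqrt n := by
    have := Real.sqrt_pos.mpr hn'; linarith
  refine ⟨2 * n / c₀, 2 * n / c₀ * (3 * Real.sqrt n), hC, mul_pos hC hsq,
    fun d hnd ν hν m x y z => ?_⟩
  have hne : (2:ℝ) ≠ 0 := two_ne_zero
  set δ : ℝ := (2:ℝ) ^ (-m) with hδdef
  have hδ : 0 < δ := by rw [hδdef]; positivity
  set zt : Euc n := projn n d hnd.le z with hzt
  set yt : Euc n := projn n d hnd.le y with hyt
  set S : Set (Euc n) := {a : Euc n |
      x ∈ Dgrid n d hnd.le a m ∧ z ∈ Dgrid n d hnd.le a m ∧ y ∉ Dgrid n d hnd.le a m}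
    with hSdef
  -- volume estimate for S
  have hvolS : volume S ≤ ENNReal.ofReal (2 * n * ‖zt - yt‖ * δ ^ (n - 1)) := by
    refine cover_vol' n δ hδ zt yt S ?_
    intro a ha
    obtain ⟨_, hz, hy⟩ := ha
    have hzm : ∀ i : Fin n, a i ≤ zt i ∧ zt i < a i + δ := hz
    have hy2 : ¬ ∀ i : Fin n, a i ≤ yt i ∧ yt i < a i + δ := hy
    push_neg at hy2
    obtain ⟨i, hi⟩ := hy2
    refine ⟨hzm, i, ?_⟩
    by_cases hcase : yt i < a i
    · exact Or.inl hcase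
    · exact Or.inr (hi (not_lt.mp hcase))
  have hSfin : volume S ≠ ⊤ := (lt_of_le_of_lt hvolS ENNReal.ofReal_lt_top).ne
  have hSvr : (volume S).toReal ≤ 2 * n * ‖zt - yt‖ * δ ^ (n - 1) :=
    ENNReal.toReal_le_of_le_ofReal (by positivity) hvolS
  -- measurability of S
  have hSm : MeasurableSet S := by
    have h1 : ∀ w : Euc d, MeasurableSet {a : Euc n | w ∈ Dgrid n d hnd.le a m} := by
      intro w
      have heq : {a : Euc n | w ∈ Dgrid n d hnd.le a m} =
          ⋂ i : Fin n, ({a : Euc n | a i ≤ projn n d hnd.le w i} ∩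
            {a : Euc n | projn n d hnd.le w i < a i + δ}) := by
        ext a
        simp only [Set.mem_iInter, Set.mem_inter_iff, Set.mem_setOf_eq]
        exact Iff.rfl
      rw [heq]
      have hmi : ∀ i : Fin n, Measurable (fun a : Euc n => a i) := fun i =>
        (measurable_pi_apply i).comp (MeasurableEquiv.toLp 2 (Fin n → ℝ)).symm.measurable
      exact MeasurableSet.iInter fun i =>
        ((measurableSet_le (hmi i) measurable_const).inter
          (measurableSet_lt measurable_const ((hmi i).add_const _)))
    exact ((h1 x).inter ((h1 z).inter (h1 y).compl))
  -- pointwise bound on the integrand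
  set f : Euc n → ℝ := fun a => ((ν (Dgrid n d hnd.le a m)).toReal)⁻¹ with hf
  set c : ℝ := c₀⁻¹ * (2:ℝ) ^ (m * (n:ℤ)) with hc
  have hcpos : 0 < c := by rw [hc]; positivity
  have hfc : ∀ a : Euc n, f a ≤ c := by
    intro a
    obtain ⟨hlo, hhi⟩ := hν a m
    have hb : (0:ℝ) < c₀ * (2:ℝ) ^ (-(m * (n:ℤ))) := by positivity
    have h3 : c₀ * (2:ℝ) ^ (-(m * (n:ℤ))) ≤ (ν (Dgrid n d hnd.le a m)).toReal := by
      have := ENNReal.toReal_mono hhi.ne hlo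
      rwa [ENNReal.toReal_ofReal hb.le] at this
    have h4 : f a ≤ (c₀ * (2:ℝ) ^ (-(m * (n:ℤ))))⁻¹ := inv_anti₀ hb h3
    refine h4.trans (le_of_eq ?_)
    rw [hc, mul_inv, zpow_neg, inv_inv]
  -- integral bound
  have hInt : (∫ a in S, f a) ≤ (2 * n * ‖zt - yt‖ * δ ^ (n - 1)) * c := by
    by_cases hint : IntegrableOn f S volume
    · calc (∫ a in S, f a) ≤ ∫ _a in S, c := by
            refine setIntegral_mono_on hint ?_ hSm (fun a _ => hfc a)
            exact integrableOn_const hSfin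
        _ = (volume S).toReal * c := by rw [setIntegral_const, smul_eq_mul, measureReal_def]
        _ ≤ (2 * n * ‖zt - yt‖ * δ ^ (n - 1)) * c :=
            mul_le_mul_of_nonneg_right hSvr hcpos.le
    · rw [integral_undef hint]
      positivity
  -- exponent arithmetic
  have e1 : δ ^ (n - 1) = (2:ℝ) ^ ((-m) * ((n:ℤ) - 1)) := by
    have hcast : ((n - 1 : ℕ) : ℤ) = (n:ℤ) - 1 := by omega
    rw [hδdef, ← zpow_natCast ((2:ℝ) ^ (-m)) (n - 1), ← zpow_mul, hcast]
  have e2 : (2:ℝ) ^ (m * (n:ℤ)) * ((2:ℝ) ^ (m * (n:ℤ)) * (2:ℝ) ^ ((-m) * ((n:ℤ) - 1)))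
      = (2:ℝ) ^ (m * ((n:ℤ) + 1)) := by
    rw [← zpow_add₀ hne, ← zpow_add₀ hne]
    congr 1
    ring
  -- main bound
  have key : LambdaM n d hnd.le ν m x z y
      ≤ 2 * n / c₀ * (2:ℝ) ^ (m * ((n:ℤ) + 1)) * ‖zt - yt‖ := by
    have hL : LambdaM n d hnd.le ν m x z y = (2:ℝ) ^ (m * (n:ℤ)) * ∫ a in S, f a := rfl
    rw [hL]
    calc (2:ℝ) ^ (m * (n:ℤ)) * ∫ a in S, f a
        ≤ (2:ℝ) ^ (m * (n:ℤ)) * ((2 * n * ‖zt - yt‖ * δ ^ (n - 1)) * c) :=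
          mul_le_mul_of_nonneg_left hInt (by positivity)
      _ = 2 * n / c₀ * (2:ℝ) ^ (m * ((n:ℤ) + 1)) * ‖zt - yt‖ := by
          rw [hc, e1, div_eq_mul_inv, ← e2]
          ring
  refine ⟨key, fun j hj => ?_⟩
  calc LambdaM n d hnd.le ν m x z y
      ≤ 2 * n / c₀ * (2:ℝ) ^ (m * ((n:ℤ) + 1)) * ‖zt - yt‖ := key
    _ ≤ 2 * n / c₀ * (2:ℝ) ^ (m * ((n:ℤ) + 1)) * (3 * Real.sqrt n * (2:ℝ) ^ (-j)) :=
        mul_le_mul_of_nonneg_left hj (by positivity)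
    _ = 2 * n / c₀ * (3 * Real.sqrt n) * (2:ℝ) ^ (m * ((n:ℤ) + 1) - j) := by
        rw [zpow_sub₀ hne, zpow_neg, div_eq_mul_inv]
        ring
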